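/- With the same setup (monotone product embeddings J₁(X) = X⊗P₂, J₂(Y) = 1⊗Y and vector state Φ of Ω₁⊗Ω₂), for all bounded operators X on H₁ and Y₁, Y₂ on H₂: Φ(J₂(Y₁) J₁(X) J₂(Y₂)) = Φ(J₂(Y₁)) · Φ(J₁(X)) · Φ(J₂(Y₂)). -/

import Mathlib

open scoped InnerProductSpace

/-- In the monotone product (embeddings `J₁ X = X ⊗ P₂`, `J₂ Y = 1 ⊗ Y`, vector state `Φ`
of `Ω = Ω₁ ⊗ Ω₂`), one has `Φ(J₂(Y₁) J₁(X) J₂(Y₂)) = Φ(J₂(Y₁)) Φ(J₁(X)) Φ(J₂(Y₂))`. -/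
theorem monotone_product_state_factorization
    {H₁ H₂ H : Type*}
    [NormedAddCommGroup H₁] [InnerProductSpace ℂ H₁] [CompleteSpace H₁]
    [NormedAddCommGroup H₂] [InnerProductSpace ℂ H₂] [CompleteSpace H₂]
    [NormedAddCommGroup H] [InnerProductSpace ℂ H] [CompleteSpace H]
    (Ω₁ : H₁) (hΩ₁ : ‖Ω₁‖ = 1) (Ω₂ : H₂) (hΩ₂ : ‖Ω₂‖ = 1)
    (Ω : H) (hΩ : ‖Ω‖ = 1)
    -- `tens A B` represents the tensor product operator `A ⊗ B` on `H = H₁ ⊗ H₂`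
    (tens : (H₁ →L[ℂ] H₁) →ₗ[ℂ] (H₂ →L[ℂ] H₂) →ₗ[ℂ] (H →L[ℂ] H))
    (htensOne : tens 1 1 = 1)
    (htensMul : ∀ (A C : H₁ →L[ℂ] H₁) (B D : H₂ →L[ℂ] H₂),
      tens A B * tens C D = tens (A * C) (B * D))
    (htensState : ∀ (A : H₁ →L[ℂ] H₁) (B : H₂ →L[ℂ] H₂),
      ⟪Ω, (tens A B) Ω⟫_ℂ = ⟪Ω₁, A Ω₁⟫_ℂ * ⟪Ω₂, B Ω₂⟫_ℂ)
    (P₂ : H₂ →L[ℂ] H₂) (hP₂ : ∀ y : H₂, P₂ y = ⟪Ω₂, y⟫_ℂ • Ω₂)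
    (X : H₁ →L[ℂ] H₁) (Y₁ Y₂ : H₂ →L[ℂ] H₂) :
    ⟪Ω, (tens 1 Y₁ * tens X P₂ * tens 1 Y₂) Ω⟫_ℂ
      = ⟪Ω, (tens 1 Y₁) Ω⟫_ℂ * ⟪Ω, (tens X P₂) Ω⟫_ℂ * ⟪Ω, (tens 1 Y₂) Ω⟫_ℂ := by
  have h1 : ⟪Ω₁, (1 : H₁ →L[ℂ] H₁) Ω₁⟫_ℂ = 1 := by
    simp [inner_self_eq_norm_sq_to_K, hΩ₁]
  have h2 : ⟪Ω₂, Ω₂⟫_ℂ = 1 := by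
    simp [inner_self_eq_norm_sq_to_K, hΩ₂]
  rw [htensMul, htensMul, htensState, htensState, htensState, htensState]
  have hY : (Y₁ * P₂ * Y₂) Ω₂ = ⟪Ω₂, Y₂ Ω₂⟫_ℂ • Y₁ Ω₂ := by
    simp [ContinuousLinearMap.mul_apply, hP₂]
  have hP : ⟪Ω₂, P₂ Ω₂⟫_ℂ = 1 := by
    rw [hP₂]; simp [h2, hΩ₂]
  simp only [one_mul, mul_one, hY, hP, h1, inner_smul_right]
  ring
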